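/- Let X = (X_t)_{0≤t≤T} and Y = (Y_t)_{0≤t≤T} be stochastic processes on a common probability space with values in ℝ^{d₁} and ℝ^{d₂} respectively, such that the σ-algebras σ(X_s : s ≤ T) and σ(Y_s : s ≤ T) are independent. Let (ℱ^X_t) and (ℱ^Y_t) be the natural filtrations of X and Y, and suppose that for some functions φ^X, ψ^X, φ^Y, ψ^Y and vectors u ∈ ℝ^{d₁}, w ∈ ℝ^{d₂}: for all 0 ≤ s ≤ t ≤ T, exp(u·X_t) and exp(w·Y_t) are integrable, E[exp(u·X_t) | ℱ^X_s] = exp(φ^X_{t−s}(u) + ψ^X_{t−s}(u)·X_s) a.s. and E[exp(w·Y_t) | ℱ^Y_s] = exp(φ^Y_{t−s}(w) + ψ^Y_{t−s}(w)·Y_s) a.s. Then, with respect to the filtration ℱ_t := ℱ^X_t ∨ ℱ^Y_t, for all 0 ≤ s ≤ t ≤ T: E[exp(u·X_t + w·Y_t) | ℱ_s] = exp( φ^X_{t−s}(u) + φ^Y_{t−s}(w) + ψ^X_{t−s}(u)·X_s + ψ^Y_{t−s}(w)·Y_s ) almost surely. In particular, the joint process (X, Y) has the affine property with φ = φ^X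 + φ^Y and ψ = (ψ^X, ψ^Y). -/

import Mathlib

open MeasureTheory Real Matrix ProbabilityTheory

/-- The natural σ-algebra at time `t` generated by a process `Z`: `σ(Z s : s ≤ t)`. -/
def naturalSigma {Ω E : Type*} [MeasurableSpace E] (Z : ℝ → Ω → E) (t : ℝ) :
    MeasurableSpace Ω :=
  ⨆ s ∈ Set.Iic t, MeasurableSpace.comap (Z s) inferInstance

lemma aux_measurable_dot {d : ℕ} (a : Fin d → ℝ) :
    Measurable fun v : Fin d → ℝ => a ⬝ᵥ v := by
  unfold dotProduct
  exact Finset.measurable_sum _ fun i _ => by fun_prop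

/-- Key lemma: conditional expectation of a product of "independent" factors. -/
lemma condexp_mul_of_indep {Ω : Type*} {m1 m2 mA mB : MeasurableSpace Ω}
    {m0 : MeasurableSpace Ω} {μ : Measure Ω} [IsProbabilityMeasure μ]
    (hA1 : mA ≤ m1) (hB2 : mB ≤ m2) (hm1 : m1 ≤ m0) (hm2 : m2 ≤ m0)
    (hindep : ProbabilityTheory.Indep m1 m2 μ)
    {F G f g : Ω → ℝ}
    (hFm : StronglyMeasurable[m1] F) (hGm : StronglyMeasurable[m2] G)
    (hFi : Integrable F μ) (hGi : Integrable G μ)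
    (hfm : StronglyMeasurable[mA] f) (hgm : StronglyMeasurable[mB] g)
    (hf : μ[F|mA] =ᵐ[μ] f) (hg : μ[G|mB] =ᵐ[μ] g) :
    μ[fun ω => F ω * G ω | mA ⊔ mB] =ᵐ[μ] fun ω => f ω * g ω := by
  have hmA : mA ≤ m0 := hA1.trans hm1
  have hmB : mB ≤ m0 := hB2.trans hm2
  have hm : mA ⊔ mB ≤ m0 := sup_le hmA hmB
  have hfm1 : StronglyMeasurable[m1] f := hfm.mono hA1
  have hgm2 : StronglyMeasurable[m2] g := hgm.mono hB2
  have hfi : Integrable f μ := integrable_condExp.congr hf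
  have hgi : Integrable g μ := integrable_condExp.congr hg
  -- independence of functions
  have hIndepFun : ∀ {p q : Ω → ℝ}, StronglyMeasurable[m1] p → StronglyMeasurable[m2] q →
      ProbabilityTheory.IndepFun p q μ := by
    intro p q hp hq
    exact ProbabilityTheory.indep_of_indep_of_le_left
      (ProbabilityTheory.indep_of_indep_of_le_right hindep
        (measurable_iff_comap_le.mp hq.measurable))
      (measurable_iff_comap_le.mp hp.measurable)
  have hFGi : Integrable (fun ω => F ω * G ω) μ := (hIndepFun hFm hGm).integrable_mul hFi hGi
  have hfgi : Integrable (fun ω => f ω * g ω) μ := (hIndepFun hfm1 hgm2).integrable_mul hfi hgi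
  -- set integrals agree on rectangles, hence on the join
  have key : ∀ A : Set Ω, MeasurableSet[mA ⊔ mB] A →
      ∫ ω in A, f ω * g ω ∂μ = ∫ ω in A, F ω * G ω ∂μ := by
    have htot : ∫ ω, f ω * g ω ∂μ = ∫ ω, F ω * G ω ∂μ := by
      rw [(hIndepFun hfm1 hgm2).integral_fun_mul_eq_mul_integral (hfm1.mono hm1).aestronglyMeasurable
        (hgm2.mono hm2).aestronglyMeasurable,
        (hIndepFun hFm hGm).integral_fun_mul_eq_mul_integral (hFm.mono hm1).aestronglyMeasurable
        (hGm.mono hm2).aestronglyMeasurable,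
        integral_congr_ae hf.symm, integral_congr_ae hg.symm,
        integral_condExp hmA, integral_condExp hmB]
    have h_eq : (mA ⊔ mB) =
        MeasurableSpace.generateFrom
          {S : Set Ω | ∃ A B, MeasurableSet[mA] A ∧ MeasurableSet[mB] B ∧ S = A ∩ B} := by
      refine le_antisymm (sup_le ?_ ?_) (MeasurableSpace.generateFrom_le ?_)
      · exact fun A hA => MeasurableSpace.measurableSet_generateFrom
          ⟨A, Set.univ, hA, MeasurableSet.univ, (Set.inter_univ A).symm⟩
      · exact fun B hB => MeasurableSpace.measurableSet_generateFrom
          ⟨Set.univ, B, MeasurableSet.univ, hB, (Set.univ_inter B).symm⟩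
      · rintro S ⟨A, B, hA, hB, rfl⟩
        exact ((le_sup_left : mA ≤ mA ⊔ mB) _ hA).inter ((le_sup_right : mB ≤ mA ⊔ mB) _ hB)
    have h_pi : IsPiSystem
        {S : Set Ω | ∃ A B, MeasurableSet[mA] A ∧ MeasurableSet[mB] B ∧ S = A ∩ B} := by
      rintro _ ⟨A1, B1, hA1', hB1', rfl⟩ _ ⟨A2, B2, hA2', hB2', rfl⟩ _
      exact ⟨A1 ∩ A2, B1 ∩ B2, hA1'.inter hA2', hB1'.inter hB2',
        Set.inter_inter_inter_comm A1 B1 A2 B2⟩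
    intro A hA
    refine @MeasurableSpace.induction_on_inter Ω (mA ⊔ mB)
      (fun A _ => ∫ ω in A, f ω * g ω ∂μ = ∫ ω in A, F ω * G ω ∂μ) _
      h_eq h_pi ?_ ?_ ?_ ?_ A hA
    · simp
    · rintro _ ⟨A, B, hA', hB', rfl⟩
      have rect : ∀ {p q : Ω → ℝ}, StronglyMeasurable[m1] p → StronglyMeasurable[m2] q →
          Integrable p μ → Integrable q μ →
          ∫ ω in A ∩ B, p ω * q ω ∂μ = (∫ ω in A, p ω ∂μ) * ∫ ω in B, q ω ∂μ := by
        intro p q hp hq hpi hqi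
        have hAm1 : MeasurableSet[m1] A := hA1 _ hA'
        have hBm2 : MeasurableSet[m2] B := hB2 _ hB'
        have hAm0 : MeasurableSet[m0] A := hm1 _ hAm1
        have hBm0 : MeasurableSet[m0] B := hm2 _ hBm2
        have hABm0 : MeasurableSet[m0] (A ∩ B) := hAm0.inter hBm0
        have hpA : StronglyMeasurable[m1] (A.indicator p) := hp.indicator hAm1
        have hqB : StronglyMeasurable[m2] (B.indicator q) := hq.indicator hBm2
        have h1 : ∫ ω in A ∩ B, p ω * q ω ∂μ
            = ∫ ω, A.indicator p ω * B.indicator q ω ∂μ := by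
          rw [← integral_indicator (μ := μ) hABm0]
          congr 1
          funext ω
          exact Set.inter_indicator_mul p q ω
        rw [h1, (hIndepFun hpA hqB).integral_fun_mul_eq_mul_integral ((hpA.mono hm1).aestronglyMeasurable)
            ((hqB.mono hm2).aestronglyMeasurable),
          integral_indicator (μ := μ) hAm0, integral_indicator (μ := μ) hBm0]
      rw [rect hfm1 hgm2 hfi hgi, rect hFm hGm hFi hGi]
      congr 1
      · rw [← setIntegral_condExp hmA hFi hA']
        exact setIntegral_congr_ae (hmA _ hA') (hf.mono fun ω h _ => h.symm)
      · rw [← setIntegral_condExp hmB hGi hB']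
        exact setIntegral_congr_ae (hmB _ hB') (hg.mono fun ω h _ => h.symm)
    · intro t ht heq
      have ht0 : MeasurableSet[m0] t := hm _ ht
      have e1 := integral_add_compl (μ := μ) ht0 hfgi
      have e2 := integral_add_compl (μ := μ) ht0 hFGi
      have : ∫ ω in t, f ω * g ω ∂μ + ∫ ω in tᶜ, f ω * g ω ∂μ
          = ∫ ω in t, F ω * G ω ∂μ + ∫ ω in tᶜ, F ω * G ω ∂μ := by rw [e1, e2, htot]
      linarith [this, heq]
    · intro S hdisj hSm hC
      have hSm0 : ∀ i, MeasurableSet[m0] (S i) := fun i => hm _ (hSm i)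
      rw [integral_iUnion (μ := μ) hSm0 hdisj hfgi.integrableOn,
        integral_iUnion (μ := μ) hSm0 hdisj hFGi.integrableOn]
      exact tsum_congr hC
  -- uniqueness of conditional expectation
  refine (ae_eq_condExp_of_forall_setIntegral_eq hm hFGi
    (fun A _ _ => hfgi.integrableOn) (fun A hA _ => key A hA) ?_).symm
  exact (((hfm.mono le_sup_left).mul (hgm.mono le_sup_right) :
    StronglyMeasurable[mA ⊔ mB] (f * g))).aestronglyMeasurable

/-- If `X` and `Y` are independent processes (i.e. `σ(X s : s ≤ T)` and `σ(Y s : s ≤ T)` are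
independent), each having the affine property with respect to its own natural filtration with
exponents `(φX, ψX)` at `u` and `(φY, ψY)` at `w`, then with respect to the filtration
`ℱ t := ℱ^X t ⊔ ℱ^Y t` one has, for all `0 ≤ s ≤ t ≤ T`, integrability and
`E[exp (u ⬝ᵥ X t + w ⬝ᵥ Y t) | ℱ s]
  = exp (φX (t-s) u + φY (t-s) w + ψX (t-s) u ⬝ᵥ X s + ψY (t-s) w ⬝ᵥ Y s)` a.s.;
i.e. the joint process `(X, Y)` has the affine property at `(u, w)` with
`φ = φX + φY` and `ψ = (ψX, ψY)`. -/
theorem joint_affine_of_indep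
    {Ω : Type*} {m0 : MeasurableSpace Ω} (μ : Measure Ω) [IsProbabilityMeasure μ]
    {d₁ d₂ : ℕ} (T : ℝ) (hT : 0 < T)
    (X : ℝ → Ω → (Fin d₁ → ℝ)) (Y : ℝ → Ω → (Fin d₂ → ℝ))
    (hXmeas : ∀ s : ℝ, Measurable (X s)) (hYmeas : ∀ s : ℝ, Measurable (Y s))
    (hindep : Indep (naturalSigma X T) (naturalSigma Y T) μ)
    (φX : ℝ → (Fin d₁ → ℝ) → ℝ) (ψX : ℝ → (Fin d₁ → ℝ) → (Fin d₁ → ℝ))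
    (φY : ℝ → (Fin d₂ → ℝ) → ℝ) (ψY : ℝ → (Fin d₂ → ℝ) → (Fin d₂ → ℝ))
    (u : Fin d₁ → ℝ) (w : Fin d₂ → ℝ)
    (hXaff : ∀ s t : ℝ, 0 ≤ s → s ≤ t → t ≤ T →
      Integrable (fun ω => exp (u ⬝ᵥ X t ω)) μ ∧
      μ[fun ω => exp (u ⬝ᵥ X t ω)|naturalSigma X s] =ᵐ[μ]
        fun ω => exp (φX (t - s) u + ψX (t - s) u ⬝ᵥ X s ω))
    (hYaff : ∀ s t : ℝ, 0 ≤ s → s ≤ t → t ≤ T →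
      Integrable (fun ω => exp (w ⬝ᵥ Y t ω)) μ ∧
      μ[fun ω => exp (w ⬝ᵥ Y t ω)|naturalSigma Y s] =ᵐ[μ]
        fun ω => exp (φY (t - s) w + ψY (t - s) w ⬝ᵥ Y s ω)) :
    ∀ s t : ℝ, 0 ≤ s → s ≤ t → t ≤ T →
      Integrable (fun ω => exp (u ⬝ᵥ X t ω + w ⬝ᵥ Y t ω)) μ ∧
      μ[fun ω => exp (u ⬝ᵥ X t ω + w ⬝ᵥ Y t ω)|naturalSigma X s ⊔ naturalSigma Y s]
        =ᵐ[μ] fun ω => exp (φX (t - s) u + φY (t - s) w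
          + ψX (t - s) u ⬝ᵥ X s ω + ψY (t - s) w ⬝ᵥ Y s ω) := by
  intro s t hs hst htT
  have hsT : s ≤ T := hst.trans htT
  -- basic measurability facts
  have hm1 : naturalSigma X T ≤ m0 :=
    iSup₂_le fun r _ => measurable_iff_comap_le.mp (hXmeas r)
  have hm2 : naturalSigma Y T ≤ m0 :=
    iSup₂_le fun r _ => measurable_iff_comap_le.mp (hYmeas r)
  have hXle : naturalSigma X s ≤ naturalSigma X T :=
    biSup_mono fun r (hr : r ∈ Set.Iic s) => le_trans hr hsT
  have hYle : naturalSigma Y s ≤ naturalSigma Y T :=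
    biSup_mono fun r (hr : r ∈ Set.Iic s) => le_trans hr hsT
  have hXr : ∀ r r' : ℝ, r ≤ r' → Measurable[naturalSigma X r'] (X r) := fun r r' hr =>
    measurable_iff_comap_le.mpr
      (le_iSup₂ (f := fun q (_ : q ∈ Set.Iic r') =>
        MeasurableSpace.comap (X q) inferInstance) r hr)
  have hYr : ∀ r r' : ℝ, r ≤ r' → Measurable[naturalSigma Y r'] (Y r) := fun r r' hr =>
    measurable_iff_comap_le.mpr
      (le_iSup₂ (f := fun q (_ : q ∈ Set.Iic r') =>
        MeasurableSpace.comap (Y q) inferInstance) r hr)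
  have hFm : StronglyMeasurable[naturalSigma X T] fun ω => exp (u ⬝ᵥ X t ω) :=
    (((aux_measurable_dot u).comp (hXr t T htT)).exp).stronglyMeasurable
  have hGm : StronglyMeasurable[naturalSigma Y T] fun ω => exp (w ⬝ᵥ Y t ω) :=
    (((aux_measurable_dot w).comp (hYr t T htT)).exp).stronglyMeasurable
  have hfm : StronglyMeasurable[naturalSigma X s]
      fun ω => exp (φX (t - s) u + ψX (t - s) u ⬝ᵥ X s ω) :=
    ((((aux_measurable_dot (ψX (t - s) u)).comp (hXr s s le_rfl)).const_add
      (φX (t - s) u)).exp).stronglyMeasurable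
  have hgm : StronglyMeasurable[naturalSigma Y s]
      fun ω => exp (φY (t - s) w + ψY (t - s) w ⬝ᵥ Y s ω) :=
    ((((aux_measurable_dot (ψY (t - s) w)).comp (hYr s s le_rfl)).const_add
      (φY (t - s) w)).exp).stronglyMeasurable
  obtain ⟨hFint, hFcond⟩ := hXaff s t hs hst htT
  obtain ⟨hGint, hGcond⟩ := hYaff s t hs hst htT
  have heqfun : (fun ω => exp (u ⬝ᵥ X t ω + w ⬝ᵥ Y t ω))
      = fun ω => exp (u ⬝ᵥ X t ω) * exp (w ⬝ᵥ Y t ω) := funext fun ω => Real.exp_add _ _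
  have hIF : ProbabilityTheory.IndepFun (fun ω => exp (u ⬝ᵥ X t ω))
      (fun ω => exp (w ⬝ᵥ Y t ω)) μ :=
    ProbabilityTheory.indep_of_indep_of_le_left
      (ProbabilityTheory.indep_of_indep_of_le_right hindep
        (measurable_iff_comap_le.mp hGm.measurable))
      (measurable_iff_comap_le.mp hFm.measurable)
  constructor
  · rw [heqfun]
    exact hIF.integrable_mul hFint hGint
  · rw [heqfun]
    have key := condexp_mul_of_indep hXle hYle hm1 hm2 hindep hFm hGm hFint hGint
      hfm hgm hFcond hGcond
    refine key.trans (Filter.EventuallyEq.of_eq (funext fun ω => ?_))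
    rw [← Real.exp_add]
    congr 1
    ring
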